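/- Let θ : C → ℝ and Λ : L⁰(ℝᴺ) × C → L⁰(ℝ) with Λ(·,Y) increasing and concave for each Y ∈ C, satisfying the compatibility: θ(Y₂) ≥ θ(Y₁) implies Λ(X,Y₂) ≥ Λ(X,Y₁) for all X. Let (B^x)_{x∈ℝ} be an increasing family of monotone convex subsets of L⁰(ℝ). Define A^Y := {Z | Λ(Z,Y) ∈ B^{θ(Y)}}. Then each A^Y is monotone, and property (P2) holds: for all m ∈ ℝ, Y₁, Y₂ ∈ C with π(Y₁) ≤ m, π(Y₂) ≤ m, X₁ ∈ A^{Y₁}, X₂ ∈ A^{Y₂}, λ ∈ [0,1], there exists Y ∈ C with π(Y) ≤ m and λX₁+(1−λ)X₂ ∈ A^Y. -/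

import Mathlib

open MeasureTheory

/-- compatibility of `θ` and `Λ` with an increasing family of monotone
convex acceptance sets gives monotone sets `A^Y = {Z | Λ(Z,Y) ∈ B^{θ(Y)}}`
satisfying property (P2). -/
theorem stmt8 {Ω : Type*} [MeasureSpace Ω] {N : ℕ}
    (C : Set (Ω → Fin N → ℝ)) (π : (Ω → Fin N → ℝ) → ℝ)
    (θ : (Ω → Fin N → ℝ) → ℝ)
    (Λ : (Ω → Fin N → ℝ) → (Ω → Fin N → ℝ) → (Ω → ℝ))
    (hΛinc : ∀ Y ∈ C, ∀ X₁ X₂ : Ω → Fin N → ℝ,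
      (∀ᵐ ω, ∀ i, X₁ ω i ≤ X₂ ω i) → ∀ᵐ ω, Λ X₁ Y ω ≤ Λ X₂ Y ω)
    (hΛconc : ∀ Y ∈ C, ∀ X₁ X₂ : Ω → Fin N → ℝ, ∀ l : ℝ, 0 ≤ l → l ≤ 1 →
      ∀ᵐ ω, l * Λ X₁ Y ω + (1 - l) * Λ X₂ Y ω ≤ Λ (l • X₁ + (1 - l) • X₂) Y ω)
    (hcomp : ∀ Y₁ ∈ C, ∀ Y₂ ∈ C, θ Y₁ ≤ θ Y₂ →
      ∀ X : Ω → Fin N → ℝ, ∀ᵐ ω, Λ X Y₁ ω ≤ Λ X Y₂ ω)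
    (B : ℝ → Set (Ω → ℝ))
    (hBinc : ∀ x₁ x₂ : ℝ, x₁ ≤ x₂ → B x₁ ⊆ B x₂)
    (hBmono : ∀ x : ℝ, ∀ Z ∈ B x, ∀ Z' : Ω → ℝ, (∀ᵐ ω, Z ω ≤ Z' ω) → Z' ∈ B x)
    (hBconv : ∀ x : ℝ, Convex ℝ (B x)) :
    (∀ Y ∈ C, ∀ X₁ : Ω → Fin N → ℝ, Λ X₁ Y ∈ B (θ Y) →
      ∀ X₂ : Ω → Fin N → ℝ, (∀ᵐ ω, ∀ i, X₁ ω i ≤ X₂ ω i) → Λ X₂ Y ∈ B (θ Y))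
    ∧ (∀ m : ℝ, ∀ Y₁ ∈ C, ∀ Y₂ ∈ C, π Y₁ ≤ m → π Y₂ ≤ m →
        ∀ X₁ : Ω → Fin N → ℝ, Λ X₁ Y₁ ∈ B (θ Y₁) →
        ∀ X₂ : Ω → Fin N → ℝ, Λ X₂ Y₂ ∈ B (θ Y₂) → ∀ l : ℝ, 0 ≤ l → l ≤ 1 →
          ∃ Y ∈ C, π Y ≤ m ∧ Λ (l • X₁ + (1 - l) • X₂) Y ∈ B (θ Y)) := by
  constructor
  · intro Y hY X₁ hX₁ X₂ hle
    exact hBmono _ _ hX₁ _ (hΛinc Y hY X₁ X₂ hle)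
  · intro m Y₁ hY₁ Y₂ hY₂ hπ₁ hπ₂ X₁ hX₁ X₂ hX₂ l hl0 hl1
    -- key lemma applied symmetrically
    have key : ∀ Ya ∈ C, ∀ Yb ∈ C, θ Ya ≤ θ Yb → Λ X₁ Ya ∈ B (θ Ya) → Λ X₂ Yb ∈ B (θ Yb) →
        Λ (l • X₁ + (1 - l) • X₂) Yb ∈ B (θ Yb) := by
      intro Ya hYa Yb hYb hθ h1 h2
      have h1' : Λ X₁ Yb ∈ B (θ Yb) :=
        hBmono _ _ (hBinc _ _ hθ h1) _ (hcomp Ya hYa Yb hYb hθ X₁)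
      have hconv : (fun ω => l * Λ X₁ Yb ω + (1 - l) * Λ X₂ Yb ω) ∈ B (θ Yb) := by
        have := hBconv (θ Yb) h1' h2 (a := l) (b := 1 - l) hl0 (by linarith) (by ring)
        convert this using 1
        rfl
      exact hBmono _ _ hconv _ (hΛconc Yb hYb X₁ X₂ l hl0 hl1)
    rcases le_total (θ Y₁) (θ Y₂) with hθ | hθ
    · exact ⟨Y₂, hY₂, hπ₂, key Y₁ hY₁ Y₂ hY₂ hθ hX₁ hX₂⟩
    · refine ⟨Y₁, hY₁, hπ₁, ?_⟩
      have h2' : Λ X₂ Y₁ ∈ B (θ Y₁) :=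
        hBmono _ _ (hBinc _ _ hθ hX₂) _ (hcomp Y₂ hY₂ Y₁ hY₁ hθ X₂)
      have hconv : (fun ω => l * Λ X₁ Y₁ ω + (1 - l) * Λ X₂ Y₁ ω) ∈ B (θ Y₁) := by
        have := hBconv (θ Y₁) hX₁ h2' (a := l) (b := 1 - l) hl0 (by linarith) (by ring)
        convert this using 1
        rfl
      exact hBmono _ _ hconv _ (hΛconc Y₁ hY₁ X₁ X₂ l hl0 hl1)
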